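/- Let n ≥ 2, let L ⊂ ℝ^{n−1} be a convex body with 0 ∈ int L, and let K ⊂ ℝⁿ be a convex body with ξ_{L×[−1,1]}(K) ≥ 4. Then K contains a unit-direction vertical segment of ‖·‖_{L×[−1,1]}-length 2: there exists x ∈ ℝⁿ such that x + s·eₙ ∈ K for all s ∈ [−1,1], where eₙ is the n-th standard basis vector. -/

import Mathlib

open scoped BigOperators Pointwise RealInnerProductSpace
open MeasureTheory

noncomputable section

/-- The support-function "norm" `‖q‖_T = max_{p ∈ T} ⟨p, q⟩`. -/
def suppNorm {d : ℕ} (T : Set (EuclideanSpace ℝ (Fin d)))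
    (q : EuclideanSpace ℝ (Fin d)) : ℝ :=
  sSup ((fun p : EuclideanSpace ℝ (Fin d) => ⟪p, q⟫) '' T)

/-- Cyclic successor on `Fin m`. -/
def cyc {m : ℕ} (i : Fin m) : Fin m := ⟨(i.val + 1) % m, Nat.mod_lt _ i.pos⟩

/-- The `T`-length of the closed polygonal line through `q 0, …, q (m-1)`. -/
def polyLen {d : ℕ} (T : Set (EuclideanSpace ℝ (Fin d))) {m : ℕ}
    (q : Fin m → EuclideanSpace ℝ (Fin d)) : ℝ :=
  ∑ i : Fin m, suppNorm T (q (cyc i) - q i)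

/-- `q` does not fit into a translate of the interior of `K`. -/
def NotFit {d : ℕ} (K : Set (EuclideanSpace ℝ (Fin d))) {m : ℕ}
    (q : Fin m → EuclideanSpace ℝ (Fin d)) : Prop :=
  ∀ t : EuclideanSpace ℝ (Fin d), ¬ (∀ i, q i - t ∈ interior K)

/-- `ξ_T(K)`: the infimum of `T`-lengths of closed polygonal lines not fitting into a
translate of the interior of `K`. -/
def xi {d : ℕ} (T K : Set (EuclideanSpace ℝ (Fin d))) : ℝ :=
  sInf { L : ℝ | ∃ m : ℕ, 2 ≤ m ∧ ∃ q : Fin m → EuclideanSpace ℝ (Fin d),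
    NotFit K q ∧ L = polyLen T q }

/-- A convex body: compact, convex, with nonempty interior. -/
def IsConvexBody {d : ℕ} (K : Set (EuclideanSpace ℝ (Fin d))) : Prop :=
  IsCompact K ∧ Convex ℝ K ∧ (interior K).Nonempty

/-- The polar set `S° = {p : ⟨p, q⟩ ≤ 1 ∀ q ∈ S}`. -/
def polarSet {d : ℕ} (S : Set (EuclideanSpace ℝ (Fin d))) :
    Set (EuclideanSpace ℝ (Fin d)) :=
  { p | ∀ q ∈ S, ⟪p, q⟫ ≤ 1 }

/-- The permutohedron: the Minkowski sum of all edges of the simplex with vertices `v`. -/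
def permutohedron {n : ℕ} (v : Fin (n + 1) → EuclideanSpace ℝ (Fin n)) :
    Set (EuclideanSpace ℝ (Fin n)) :=
  ∑ p ∈ Finset.univ.filter (fun p : Fin (n + 1) × Fin (n + 1) => p.1 < p.2),
    segment ℝ (v p.1) (v p.2)

end

/-- The Lagrangian-product body `L × [-1,1] ⊆ ℝᵐ × ℝ = ℝ^{m+1}`. -/
def prodSeg {m : ℕ} (L : Set (EuclideanSpace ℝ (Fin m))) :
    Set (EuclideanSpace ℝ (Fin (m + 1))) :=
  { x | (show EuclideanSpace ℝ (Fin m) from WithLp.toLp 2 (fun i => x i.castSucc)) ∈ L ∧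
        |x (Fin.last m)| ≤ 1 }

section helperaux
variable {m : ℕ} {L : Set (EuclideanSpace ℝ (Fin m))}

lemma zero_mem_prodSeg (h : (0 : EuclideanSpace ℝ (Fin m)) ∈ L) :
    (0 : EuclideanSpace ℝ (Fin (m+1))) ∈ prodSeg L := by
  exact ⟨h, by simp⟩

lemma inner_smul_single (p : EuclideanSpace ℝ (Fin (m+1))) (a : ℝ) :
    ⟪p, a • EuclideanSpace.single (Fin.last m) (1 : ℝ)⟫ = a * p (Fin.last m) := by
  rw [real_inner_smul_right, EuclideanSpace.inner_single_right]
  simp [mul_comm]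

lemma single_mem_prodSeg (h : (0 : EuclideanSpace ℝ (Fin m)) ∈ L) (b : ℝ) (hb : |b| ≤ 1) :
    (EuclideanSpace.single (Fin.last m) b : EuclideanSpace ℝ (Fin (m+1))) ∈ prodSeg L := by
  refine ⟨?_, by simpa using hb⟩
  convert h using 1
  ext i
  simp [EuclideanSpace.single_apply, (Fin.castSucc_lt_last i).ne]

lemma suppNorm_smul_single (h : (0 : EuclideanSpace ℝ (Fin m)) ∈ L) (a : ℝ) :
    suppNorm (prodSeg L) (a • EuclideanSpace.single (Fin.last m) (1 : ℝ)) = |a| := by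
  apply IsGreatest.csSup_eq
  constructor
  · refine ⟨EuclideanSpace.single (Fin.last m) (if 0 ≤ a then (1:ℝ) else -1), ?_, ?_⟩
    · exact single_mem_prodSeg h _ (by split <;> norm_num)
    · dsimp only
      rw [inner_smul_single]
      simp only [EuclideanSpace.single_apply, eq_self_iff_true, if_true]
      rcases le_or_gt 0 a with hh | hh
      · rw [if_pos hh, abs_of_nonneg hh]; ring
      · rw [if_neg (not_le.mpr hh), abs_of_neg hh]; ring
  · rintro x ⟨p, hp, rfl⟩
    dsimp only
    rw [inner_smul_single]
    calc a * p (Fin.last m) ≤ |a * p (Fin.last m)| := le_abs_self _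
    _ = |a| * |p (Fin.last m)| := abs_mul _ _
    _ ≤ |a| * 1 := by have := hp.2; nlinarith [abs_nonneg a]
    _ = |a| := mul_one _

lemma suppNorm_nonneg (h : (0 : EuclideanSpace ℝ (Fin m)) ∈ L)
    (v : EuclideanSpace ℝ (Fin (m+1))) : 0 ≤ suppNorm (prodSeg L) v :=
  Real.sSup_nonneg' ⟨⟪(0 : EuclideanSpace ℝ (Fin (m+1))), v⟫,
    ⟨0, zero_mem_prodSeg h, rfl⟩, by simp⟩

end helperaux

/-- if `ξ_{L×[-1,1]}(K) ≥ 4`, then `K` contains a vertical segment of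
`‖·‖_{L×[-1,1]}`-length `2`. -/
theorem contains_vertical_segment (m : ℕ) (hm : 1 ≤ m)
    (L : Set (EuclideanSpace ℝ (Fin m))) (hL : IsConvexBody L)
    (h0 : (0 : EuclideanSpace ℝ (Fin m)) ∈ interior L)
    (K : Set (EuclideanSpace ℝ (Fin (m + 1)))) (hK : IsConvexBody K)
    (hxi : xi (prodSeg L) K ≥ 4) :
    ∃ x : EuclideanSpace ℝ (Fin (m + 1)), ∀ s ∈ Set.Icc (-1 : ℝ) 1,
      x + s • EuclideanSpace.single (Fin.last m) (1 : ℝ) ∈ K := by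
  classical
  by_contra hcon
  push_neg at hcon
  set e : EuclideanSpace ℝ (Fin (m+1)) := EuclideanSpace.single (Fin.last m) (1:ℝ) with he
  have hL0 : (0 : EuclideanSpace ℝ (Fin m)) ∈ L := interior_subset h0
  have hstep : ∃ c : ℝ, 0 < c ∧ c < 1 ∧ ∀ x, ¬(x + c • e ∈ K ∧ x - c • e ∈ K) := by
    by_contra hno
    push_neg at hno
    set c : ℕ → ℝ := fun k => 1 - 1/(k+2) with hc
    have hc0 : ∀ k : ℕ, 0 < c k := by
      intro k
      have h2 : (0:ℝ) < (k:ℝ) + 2 := by positivity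
      have h1 : (1:ℝ)/((k:ℝ)+2) < 1 := by
        rw [div_lt_one h2]
        have : (0:ℝ) ≤ (k:ℝ) := Nat.cast_nonneg k
        linarith
      simp only [hc]
      linarith
    have hc1 : ∀ k : ℕ, c k < 1 := by
      intro k
      have : (0:ℝ) < 1/((k:ℝ)+2) := by positivity
      simp only [hc]
      linarith
    choose x hx using fun k => hno (c k) (hc0 k) (hc1 k)
    have hseg : ∀ k : ℕ, ∀ s ∈ Set.Icc (-1:ℝ) 1, x k + (s * c k) • e ∈ K := by
      intro k s hs
      have key : x k + (s * c k) • e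
          = ((1+s)/2) • (x k + c k • e) + ((1-s)/2) • (x k - c k • e) := by module
      rw [key]
      exact hK.2.1 (hx k).1 (hx k).2 (by linarith [hs.1]) (by linarith [hs.2]) (by ring)
    have hxK : ∀ k, x k ∈ K := by
      intro k
      have := hseg k 0 ⟨by norm_num, by norm_num⟩
      simpa using this
    obtain ⟨xlim, hxlimK, φ, hφ, hlim⟩ := hK.1.tendsto_subseq hxK
    obtain ⟨s, hs, hnot⟩ := hcon xlim
    apply hnot
    have hctend : Filter.Tendsto c Filter.atTop (nhds 1) := by
      have h2 : Filter.Tendsto (fun k : ℕ => ((k:ℝ)+2)) Filter.atTop Filter.atTop :=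
        Filter.tendsto_atTop_add_const_right _ 2 tendsto_natCast_atTop_atTop
      have h3 : Filter.Tendsto (fun k : ℕ => 1 - ((k:ℝ)+2)⁻¹) Filter.atTop (nhds (1 - 0)) :=
        tendsto_const_nhds.sub h2.inv_tendsto_atTop
      simpa [hc, one_div] using h3
    have hc' : Filter.Tendsto (fun j => c (φ j)) Filter.atTop (nhds 1) :=
      hctend.comp hφ.tendsto_atTop
    have hsm : Filter.Tendsto (fun j => (s * c (φ j)) • e) Filter.atTop (nhds ((s*1) • e)) :=
      (tendsto_const_nhds.mul hc').smul_const e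
    have hy := hlim.add hsm
    rw [mul_one] at hy
    exact hK.1.isClosed.mem_of_tendsto hy
      (Filter.Eventually.of_forall fun j => hseg (φ j) s hs)
  obtain ⟨c, hcpos, hclt, hcK⟩ := hstep
  set q : Fin 2 → EuclideanSpace ℝ (Fin (m+1)) := ![(-c) • e, c • e] with hq
  have hnf : NotFit K q := by
    intro t ht
    refine hcK (-t) ⟨?_, ?_⟩
    · have h1 := interior_subset (ht 1)
      have h2 : q 1 - t = -t + c • e := by
        simp only [hq, Matrix.cons_val_one, Matrix.head_cons, Matrix.cons_val_zero]
        module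
      rwa [h2] at h1
    · have h1 := interior_subset (ht 0)
      have h2 : q 0 - t = -t - c • e := by
        simp only [hq, Matrix.cons_val_zero]
        module
      rwa [h2] at h1
  have hlen : polyLen (prodSeg L) q = 4 * c := by
    have e1 : cyc (0 : Fin 2) = 1 := rfl
    have e2 : cyc (1 : Fin 2) = 0 := rfl
    rw [polyLen, Fin.sum_univ_two, e1, e2]
    have d1 : q 1 - q 0 = (2*c) • e := by
      simp only [hq, Matrix.cons_val_one, Matrix.head_cons, Matrix.cons_val_zero]
      module
    have d2 : q 0 - q 1 = (-(2*c)) • e := by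
      simp only [hq, Matrix.cons_val_one, Matrix.head_cons, Matrix.cons_val_zero]
      module
    rw [d1, d2, he, suppNorm_smul_single hL0, suppNorm_smul_single hL0]
    rw [abs_of_nonneg (by linarith : (0:ℝ) ≤ 2*c), abs_neg,
      abs_of_nonneg (by linarith : (0:ℝ) ≤ 2*c)]
    ring
  have hle : xi (prodSeg L) K ≤ polyLen (prodSeg L) q := by
    apply csInf_le
    · refine ⟨0, ?_⟩
      rintro L' ⟨m', hm', q', hq', rfl⟩
      exact Finset.sum_nonneg fun i _ => suppNorm_nonneg hL0 _
    · exact ⟨2, le_refl 2, q, hnf, rfl⟩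
  rw [hlen] at hle
  linarith
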